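/- In a DAG, if a node R is a leaf (has no outgoing edges) and two distinct nodes X and Y (both different from R) are d-separated by a set Z together with {R}, where R ∉ Z and X, Y ∉ Z, then X and Y are d-separated by Z alone. -/

import Mathlib

/-- A directed graph (edge relation) is acyclic. -/
def IsAcyclic {α : Type*} (G : α → α → Prop) : Prop :=
  ∀ v, ¬ Relation.TransGen G v v

/-- A leaf node: no outgoing edges. -/
def IsLeaf {α : Type*} (G : α → α → Prop) (v : α) : Prop :=
  ∀ w, ¬ G v w

/-- An undirected path from `x` to `y`: a list of at least two distinct vertices,
starting at `x`, ending at `y`, consecutive vertices adjacent (in either direction). -/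
def IsUPath {α : Type*} (G : α → α → Prop) (x y : α) (p : List α) : Prop :=
  2 ≤ p.length ∧ p.head? = some x ∧ p.getLast? = some y ∧ p.Nodup ∧
    p.Chain' (fun a b => G a b ∨ G b a)

/-- The vertex at (interior) position `i` of `p` is a collider:
both adjacent path edges point into it. -/
def ColliderAt {α : Type*} (G : α → α → Prop) (p : List α) (i : ℕ) : Prop :=
  ∃ a b c, p[i-1]? = some a ∧ p[i]? = some b ∧ p[i+1]? = some c ∧ G a b ∧ G c b

/-- A path is active given conditioning set `S`: every interior collider is in `S`
or has a descendant in `S`, and every interior non-collider is not in `S`. -/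
def ActivePath {α : Type*} (G : α → α → Prop) (S : Set α) (x y : α) (p : List α) : Prop :=
  IsUPath G x y p ∧
    ∀ i, 0 < i → i + 1 < p.length →
      ∀ b, p[i]? = some b →
        (ColliderAt G p i → b ∈ S ∨ ∃ d ∈ S, Relation.ReflTransGen G b d) ∧
        (¬ ColliderAt G p i → b ∉ S)

/-- d-separation: no active undirected path between `x` and `y` given `S`. -/
def DSep {α : Type*} (G : α → α → Prop) (x y : α) (S : Set α) : Prop :=
  ∀ p : List α, ¬ ActivePath G S x y p

/-- In a DAG, if `R` is a leaf node and distinct nodes `X`, `Y`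
(both different from `R`, none in `Z`, `R ∉ Z`) are d-separated by `Z ∪ {R}`,
then they are d-separated by `Z` alone. -/
theorem dsep_of_dsep_union_leaf {α : Type*} (G : α → α → Prop) (hG : IsAcyclic G)
    (R X Y : α) (Z : Set α) (hleaf : IsLeaf G R)
    (hXY : X ≠ Y) (hXR : X ≠ R) (hYR : Y ≠ R)
    (hRZ : R ∉ Z) (hXZ : X ∉ Z) (hYZ : Y ∉ Z)
    (h : DSep G X Y (Z ∪ {R})) : DSep G X Y Z := by
  intro p hp
  apply h p
  obtain ⟨hup, hint⟩ := hp
  refine ⟨hup, fun i hi0 hi1 b hb => ?_⟩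
  obtain ⟨hcol, hnc⟩ := hint i hi0 hi1 b hb
  constructor
  · intro hc
    rcases hcol hc with h1 | ⟨d, hd, hdd⟩
    · exact Or.inl (Or.inl h1)
    · exact Or.inr ⟨d, Or.inl hd, hdd⟩
  · intro hc
    have hbZ := hnc hc
    rintro (h1 | h1)
    · exact hbZ h1
    · -- b = R, interior, must be a collider since R is a leaf
      have hbR : b = R := h1
      apply hc
      have hlen : i + 1 < p.length := hi1
      have hi1' : i - 1 < p.length := by omega
      have hi2' : i < p.length := by omega
      have hchain := hup.2.2.2.2
      replace hchain := List.isChain_iff_getElem.mp hchain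
      have e1 := hchain (i-1) (by omega)
      have e2 := hchain i (by omega)
      have heq : i - 1 + 1 = i := by omega
      simp only [heq] at e1
      have hbb : p[i] = b := by
        rw [List.getElem?_eq_getElem hi2'] at hb
        simpa using hb
      refine ⟨p.get ⟨i-1, hi1'⟩, b, p.get ⟨i+1, hlen⟩, ?_, hb, ?_, ?_, ?_⟩
      · simp [List.getElem?_eq_getElem hi1']
      · simp [List.getElem?_eq_getElem hlen]
      · rcases e1 with h2 | h2
        · rwa [hbb] at h2
        · exfalso; rw [hbb, hbR] at h2; exact hleaf _ h2
      · rcases e2 with h2 | h2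
        · exfalso; rw [hbb, hbR] at h2; exact hleaf _ h2
        · rwa [hbb] at h2
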